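/- Let x be a positive integer and let f(y1,y2,y3) = -(x-y1)y1 - (x-y3)y3 + (Δ1+Δ3-Δ4)y3 + (Δ2+Δ4)²/4 + Δ1²/4 - (y1-y3-Δ1/2)² - (y1-y2+y3-(Δ2+Δ4)/2)², where Δ1,Δ2,Δ3,Δ4 are integers with Δ1+Δ3-Δ4 ≤ 0. If x > (Δ2+Δ4)²/4 + Δ3²/4 + Δ1²/4 + Δ1²/2 (i.e., x is sufficiently large, say x > (Δ2+Δ4)²/4 + Δ1² + Δ3²) and y1 is an integer with 0 < y1 < x, and 0 ≤ y3 ≤ x, then f(y1,y2,y3) < 0 for all real y2. -/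
import Mathlib

theorem stmt_2 (x y1 Δ1 Δ2 Δ3 Δ4 : ℤ) (hx : 0 < x)
    (hΔ : Δ1 + Δ3 - Δ4 ≤ 0)
    (hxlarge : (x : ℝ) > ((Δ2 : ℝ) + Δ4)^2/4 + (Δ1 : ℝ)^2 + (Δ3 : ℝ)^2)
    (hy1 : 0 < y1) (hy1x : y1 < x)
    (y3 : ℝ) (hy3 : 0 ≤ y3) (hy3x : y3 ≤ (x : ℝ)) :
    ∀ y2 : ℝ,
      -((x : ℝ) - y1)*(y1 : ℝ) - ((x : ℝ) - y3)*y3 + ((Δ1 : ℝ) + Δ3 - Δ4)*y3 +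
        ((Δ2 : ℝ) + Δ4)^2/4 + (Δ1 : ℝ)^2/4 - ((y1 : ℝ) - y3 - (Δ1 : ℝ)/2)^2 -
        ((y1 : ℝ) - y2 + y3 - ((Δ2 : ℝ) + Δ4)/2)^2 < 0 := by
  intro y2
  -- integer rounding of hxlarge
  have i1z : (Δ2 + Δ4)^2 + 4*Δ1^2 + 4*Δ3^2 + 1 ≤ 4*x := by
    have h : (((Δ2 + Δ4)^2 + 4*Δ1^2 + 4*Δ3^2 : ℤ) : ℝ) < ((4*x : ℤ) : ℝ) := by
      push_cast; nlinarith [hxlarge]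
    have h2 : (Δ2 + Δ4)^2 + 4*Δ1^2 + 4*Δ3^2 < 4*x := by exact_mod_cast h
    linarith
  have i1 : ((Δ2:ℝ) + Δ4)^2 + 4*(Δ1:ℝ)^2 + 4*(Δ3:ℝ)^2 + 1 ≤ 4*(x:ℝ) := by
    exact_mod_cast i1z
  -- (x - y1) * y1 ≥ x - 1
  have i2z : x - 1 ≤ (x - y1) * y1 := by
    nlinarith [mul_nonneg (by omega : (0:ℤ) ≤ y1 - 1) (by omega : (0:ℤ) ≤ x - 1 - y1)]
  have i2 : ((x:ℝ) - y1) * y1 ≥ (x:ℝ) - 1 := by exact_mod_cast i2z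
  have hy1R : (1:ℝ) ≤ (y1:ℝ) := by exact_mod_cast hy1
  have hy1xR : (y1:ℝ) + 1 ≤ (x:ℝ) := by exact_mod_cast hy1x
  -- key positivity: (y1 - y3)^2 + (x - y3)*y3 ≥ 1
  have i3 : ((y1:ℝ) - y3)^2 + ((x:ℝ) - y3)*y3 ≥ 1 := by
    rcases le_or_gt 0 ((x:ℝ) - 2*y1) with h | h
    · nlinarith [mul_nonneg h hy3]
    · nlinarith [mul_nonneg (le_of_lt (by linarith : (0:ℝ) < 2*(y1:ℝ) - x))
        (by linarith : (0:ℝ) ≤ (x:ℝ) - y3)]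
  have hΔR : (Δ1:ℝ) + Δ3 - Δ4 ≤ 0 := by exact_mod_cast hΔ
  have i4 : ((Δ1:ℝ) + Δ3 - Δ4) * y3 ≤ 0 := mul_nonpos_of_nonpos_of_nonneg hΔR hy3
  have hP : (0:ℝ) ≤ ((x:ℝ) - y3) * y3 := mul_nonneg (by linarith) hy3
  have hS2 : (0:ℝ) ≤ ((y1:ℝ) - y2 + y3 - ((Δ2:ℝ) + Δ4)/2)^2 := sq_nonneg _
  rcases eq_or_ne Δ1 0 with h0 | h0
  · have hΔ1R : (Δ1:ℝ) = 0 := by exact_mod_cast h0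
    have e : ((y1:ℝ) - y3 - (Δ1:ℝ)/2)^2 = ((y1:ℝ) - y3)^2 := by rw [hΔ1R]; ring
    have e2 : (Δ1:ℝ)^2 = 0 := by rw [hΔ1R]; ring
    rw [e]
    linarith [i1, i2, i3, i4, hP, hS2, e2, sq_nonneg ((Δ3:ℝ))]
  · have hΔ1sq : (1:ℝ) ≤ (Δ1:ℝ)^2 := by
      have h1 : (1:ℤ) ≤ Δ1^2 := by
        have : Δ1 ≤ -1 ∨ 1 ≤ Δ1 := by omega
        rcases this with h | h <;> nlinarith
      exact_mod_cast h1
    nlinarith [i1, i2, i3, i4, hP, hS2, hΔ1sq,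
      sq_nonneg ((Δ1:ℝ) - ((y1:ℝ) - y3))]
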